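/- Let K be a field, G a finite group, and (V,Q) a metabolic equivariant quadratic KG-module (i.e., there exists a KG-submodule N with N = N^⊥ and Q(N) = 0, where ⊥ is taken with respect to the polarization B_Q). If U ≤ V is any KG-submodule with Q(U) = 0, then there exists a KG-submodule M of V containing U with M = M^⊥ and Q(M) = 0. -/

import Mathlib

open QuadraticMap

variable {K : Type*} [Field K] {G : Type*} [Group G]
variable {V W : Type*} [AddCommGroup V] [Module K V] [AddCommGroup W] [Module K W]

/-- `U` is a `KG`-submodule, i.e. invariant under the representation `ρ`. -/
def IsSubrep (ρ : Representation K G V) (U : Submodule K V) : Prop :=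
  ∀ g : G, ∀ v ∈ U, ρ g v ∈ U

/-- The quadratic form `Q` is `G`-invariant. -/
def GInvariantQF (ρ : Representation K G V) (Q : QuadraticForm K V) : Prop :=
  ∀ g v, Q (ρ g v) = Q v

/-- Orthogonal complement of a submodule with respect to the polarization of `Q`. -/
def qperp (Q : QuadraticForm K V) (U : Submodule K V) : Submodule K V :=
  LinearMap.BilinForm.orthogonal Q.polarBilin U

/-- `Q` is non-degenerate: the radical of its polarization is zero. -/
def QNondeg (Q : QuadraticForm K V) : Prop :=
  LinearMap.BilinForm.Nondegenerate Q.polarBilin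

/-- `(V, Q)` is metabolic: there is a `KG`-submodule `N` with `N = N^⊥` and `Q(N) = 0`. -/
def Metabolic (ρ : Representation K G V) (Q : QuadraticForm K V) : Prop :=
  ∃ N : Submodule K V, IsSubrep ρ N ∧ N = qperp Q N ∧ ∀ v ∈ N, Q v = 0

/-- `(V, Q)` is anisotropic: `Q` does not vanish on any non-zero `KG`-submodule. -/
def AnisotropicRep (ρ : Representation K G V) (Q : QuadraticForm K V) : Prop :=
  ∀ U : Submodule K V, IsSubrep ρ U → (∀ v ∈ U, Q v = 0) → U = ⊥

/-- The product (orthogonal direct sum) of two representations. -/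
def prodRep (ρ : Representation K G V) (σ : Representation K G W) :
    Representation K G (V × W) :=
  ⟨⟨fun g => (ρ g).prodMap (σ g), by ext v <;> simp⟩, fun g h => by ext v <;> simp⟩

/-- `V` is a simple `KG`-module. -/
def SimpleRep (ρ : Representation K G V) : Prop :=
  Nontrivial V ∧ ∀ U : Submodule K V, IsSubrep ρ U → U = ⊥ ∨ U = ⊤

/-- `V` is a self-dual `KG`-module. -/
def SelfDualRep (ρ : Representation K G V) : Prop :=
  ∃ f : V ≃ₗ[K] Module.Dual K V, ∀ g v, f (ρ g v) = ρ.dual g (f v)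

section Proof

open LinearMap.BilinForm Module Submodule

variable {K : Type*} [Field K] {G : Type*} [Group G]
variable {V : Type*} [AddCommGroup V] [Module K V]

private lemma polar_refl (Q : QuadraticForm K V) :
    (Q.polarBilin : LinearMap.BilinForm K V).IsRefl := by
  intro x y h
  rwa [polarBilin_apply_apply, polar_comm, ← polarBilin_apply_apply] at h

private lemma orthogonal_sup' (Q : QuadraticForm K V) (N L : Submodule K V) :
    orthogonal Q.polarBilin (N ⊔ L) = orthogonal Q.polarBilin N ⊓ orthogonal Q.polarBilin L := by
  ext x
  simp only [mem_orthogonal_iff, Submodule.mem_inf]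
  constructor
  · exact fun h => ⟨fun n hn => h n (Submodule.mem_sup_left hn),
      fun l hl => h l (Submodule.mem_sup_right hl)⟩
  · rintro ⟨h1, h2⟩ n hn
    rcases Submodule.mem_sup.1 hn with ⟨a, ha, b, hb, rfl⟩
    have h1' := h1 a ha
    have h2' := h2 b hb
    simp only [LinearMap.BilinForm.IsOrtho, polarBilin_apply_apply] at *
    rw [polar_add_left, h1', h2', add_zero]

theorem stmt0' {K : Type*} [Field K] {G : Type*} [Group G]
    {V : Type*} [AddCommGroup V] [Module K V] [Finite G] [FiniteDimensional K V]
    (ρ : Representation K G V) (Q : QuadraticForm K V)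
    (hinv : GInvariantQF ρ Q) (hnd : QNondeg Q) (hmet : Metabolic ρ Q)
    (U : Submodule K V) (hU : IsSubrep ρ U) (hU0 : ∀ v ∈ U, Q v = 0) :
    ∃ M : Submodule K V, IsSubrep ρ M ∧ U ≤ M ∧ M = qperp Q M ∧ ∀ v ∈ M, Q v = 0 := by
  classical
  obtain ⟨N, hNsub, hNperp0, hN0⟩ := hmet
  have hNperp : N = LinearMap.BilinForm.orthogonal Q.polarBilin N := hNperp0
  have hrefl : (Q.polarBilin : LinearMap.BilinForm K V).IsRefl := polar_refl Q
  have hndB : LinearMap.BilinForm.Nondegenerate (Q.polarBilin (R := K) (M := V)) := hnd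
  -- B-invariance
  have hBinv : ∀ (g : G) (v w : V), polar Q (ρ g v) (ρ g w) = polar Q v w := by
    intro g v w
    rw [QuadraticMap.polar, QuadraticMap.polar, ← map_add, hinv g, hinv g, hinv g]
  -- B vanishes on isotropic submodules
  have hiso : ∀ (S : Submodule K V), (∀ v ∈ S, Q v = 0) →
      ∀ x ∈ S, ∀ y ∈ S, polar Q x y = 0 := by
    intro S hS x hx y hy
    rw [QuadraticMap.polar, hS x hx, hS y hy, hS (x + y) (S.add_mem hx hy)]
    ring
  -- orthogonal of a subrep is a subrep
  have hperp_sub : ∀ (S : Submodule K V), IsSubrep ρ S →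
      IsSubrep ρ (LinearMap.BilinForm.orthogonal Q.polarBilin S) := by
    intro S hS g v hv u hu
    have h1 : ρ g (ρ g⁻¹ u) = u := by
      rw [← Module.End.mul_apply, ← map_mul, mul_inv_cancel, map_one, Module.End.one_apply]
    have := hv (ρ g⁻¹ u) (hS g⁻¹ u hu)
    simp only [LinearMap.BilinForm.IsOrtho, polarBilin_apply_apply] at *
    rw [← h1, hBinv]
    exact this
  set M : Submodule K V := U ⊔ (N ⊓ LinearMap.BilinForm.orthogonal Q.polarBilin U) with hM
  have hUperp : U ≤ LinearMap.BilinForm.orthogonal Q.polarBilin U := by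
    intro x hx y hy
    exact hiso U hU0 y hy x hx
  -- M is isotropic
  have hM0 : ∀ v ∈ M, Q v = 0 := by
    intro v hv
    rcases Submodule.mem_sup.1 hv with ⟨u, hu, n, hn, rfl⟩
    have hnN : n ∈ N := hn.1
    have hone : polar Q u n = 0 := by
      have := hn.2 u hu
      simpa only [LinearMap.BilinForm.IsOrtho, polarBilin_apply_apply] using this
    have hadd : Q (u + n) = Q u + Q n + polar Q u n := QuadraticMap.map_add (⇑Q) u n
    rw [hadd, hU0 u hu, hN0 n hnN, hone]; ring
  -- M is a subrep
  have hMsub : IsSubrep ρ M := by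
    intro g v hv
    rcases Submodule.mem_sup.1 hv with ⟨u, hu, n, hn, rfl⟩
    rw [map_add]
    exact Submodule.add_mem_sup (hU g u hu)
      ⟨hNsub g n hn.1, hperp_sub U hU g n hn.2⟩
  -- dimension bookkeeping
  have horthrank : ∀ S : Submodule K V,
      finrank K S + finrank K (LinearMap.BilinForm.orthogonal Q.polarBilin S) = finrank K V := by
    intro S
    have := finrank_add_finrank_orthogonal (B := (Q.polarBilin : LinearMap.BilinForm K V)) hrefl S
    rwa [orthogonal_top_eq_bot hndB, inf_bot_eq, finrank_bot, add_zero] at this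
  have hNN : finrank K N + finrank K N = finrank K V := by
    have := horthrank N
    rwa [← hNperp] at this
  have hsupperp : LinearMap.BilinForm.orthogonal Q.polarBilin
      (N ⊔ LinearMap.BilinForm.orthogonal Q.polarBilin U) = N ⊓ U := by
    rw [orthogonal_sup', orthogonal_orthogonal hndB hrefl, ← hNperp]
  have hinfU : U ⊓ (N ⊓ LinearMap.BilinForm.orthogonal Q.polarBilin U) = N ⊓ U := by
    apply le_antisymm
    · exact le_inf (inf_le_right.trans inf_le_left) inf_le_left
    · exact le_inf inf_le_right (le_inf inf_le_left (inf_le_right.trans hUperp))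
  have e2 := horthrank U
  have e3 := Submodule.finrank_sup_add_finrank_inf_eq N
    (LinearMap.BilinForm.orthogonal Q.polarBilin U)
  have e4 := horthrank (N ⊔ LinearMap.BilinForm.orthogonal Q.polarBilin U)
  rw [hsupperp] at e4
  have e5 := Submodule.finrank_sup_add_finrank_inf_eq U
    (N ⊓ LinearMap.BilinForm.orthogonal Q.polarBilin U)
  rw [hinfU, ← hM] at e5
  have hMrank : finrank K M = finrank K N := by omega
  have hMperp_rank : finrank K M =
      finrank K (LinearMap.BilinForm.orthogonal Q.polarBilin M) := by
    have := horthrank M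
    omega
  have hMle : M ≤ LinearMap.BilinForm.orthogonal Q.polarBilin M := by
    intro x hx y hy
    exact hiso M hM0 y hy x hx
  have hMeq : M = LinearMap.BilinForm.orthogonal Q.polarBilin M :=
    Submodule.eq_of_le_of_finrank_eq hMle hMperp_rank
  exact ⟨M, hMsub, le_sup_left, hMeq, hM0⟩

end Proof

/-- In a metabolic equivariant quadratic module every isotropic
`KG`-submodule is contained in a self-perpendicular isotropic `KG`-submodule. -/
theorem stmt0 [Finite G] [FiniteDimensional K V]
    (ρ : Representation K G V) (Q : QuadraticForm K V)
    (hinv : GInvariantQF ρ Q) (hnd : QNondeg Q) (hmet : Metabolic ρ Q)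
    (U : Submodule K V) (hU : IsSubrep ρ U) (hU0 : ∀ v ∈ U, Q v = 0) :
    ∃ M : Submodule K V, IsSubrep ρ M ∧ U ≤ M ∧ M = qperp Q M ∧ ∀ v ∈ M, Q v = 0 := by
  exact stmt0' ρ Q hinv hnd hmet U hU hU0
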